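/- arXiv:1811.09526 — 2 statements merged into one kernel-verified Lean document; each statement's English description precedes it below -/
import Mathlib

section
/- (Functional equation for spherical functions) Assume (G,K,θ) is a multiplicity-free triple. A nonzero function φ ∈ L(G) is a spherical function if and only if Σ_{k∈K} φ(gkh)·conj(ψ(k)) = φ(g)·φ(h) for all g, h ∈ G. -/
open scoped BigOperators ComplexConjugate Classical

set_option linter.unusedSectionVars false
set_option synthInstance.maxHeartbeats 1000000
set_option maxHeartbeats 1000000

noncomputable section

namespace MFT

variable {G : Type} [Group G] [Fintype G]
variable {V : Type} [NormedAddCommGroup V] [InnerProductSpace ℂ V] [FiniteDimensional ℂ V]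

/-- Left translation of functions on `G`: `(translate h f) g = f (h⁻¹ * g)`.
This is the left regular action of `G`. -/
def translate {A : Type} (h : G) (f : G → A) : G → A := fun g => f (h⁻¹ * g)

/-- A representation by linear automorphisms is unitary if it preserves the inner product. -/
def IsUnitaryRep {H W : Type} [Group H] [NormedAddCommGroup W] [InnerProductSpace ℂ W]
    (ρ : H →* (W ≃ₗ[ℂ] W)) : Prop :=
  ∀ (h : H) (x y : W), (inner ℂ (ρ h x) (ρ h y) : ℂ) = (inner ℂ x y : ℂ)

/-- Irreducibility of a representation: the space is nonzero and has no proper nonzero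
invariant subspace. -/
def IsIrreducibleRep {H W : Type} [Group H] [AddCommGroup W] [Module ℂ W]
    (ρ : H →* (W ≃ₗ[ℂ] W)) : Prop :=
  (⊥ : Submodule ℂ W) ≠ ⊤ ∧
    ∀ p : Submodule ℂ W, (∀ (h : H) (x : W), x ∈ p → ρ h x ∈ p) → p = ⊥ ∨ p = ⊤

variable (K : Subgroup G) (θ : ↥K →* (V ≃ₗ[ℂ] V))

/-- The space `Ind_K^G V` of the representation induced by `θ`:
functions `f : G → V` with `f (g k) = θ k⁻¹ (f g)`. -/
def ind : Submodule ℂ (G → V) where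
  carrier := {f | ∀ (g : G) (k : K), f (g * (k : G)) = θ k⁻¹ (f g)}
  add_mem' := by
    intro f₁ f₂ h₁ h₂ g k
    simp only [Pi.add_apply, h₁ g k, h₂ g k, map_add]
  zero_mem' := by intro g k; simp
  smul_mem' := by
    intro c f hf g k
    simp only [Pi.smul_apply, hf g k, map_smul]

theorem translate_mem_ind {f : G → V} (hf : f ∈ ind K θ) (h : G) : translate h f ∈ ind K θ := by
  intro g k
  simpa [translate, mul_assoc] using hf (h⁻¹ * g) k

/-- The left regular action of `G` on the induced space, `λ(h) f = f (h⁻¹ ·)`. -/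
def lamL (h : G) : ↥(ind K θ) →ₗ[ℂ] ↥(ind K θ) where
  toFun f := ⟨translate h ↑f, translate_mem_ind K θ f.2 h⟩
  map_add' f₁ f₂ := by apply Subtype.ext; funext g; simp [translate]
  map_smul' c f := by apply Subtype.ext; funext g; simp [translate]

instance : AddCommGroup (↥(ind K θ) →ₗ[ℂ] ↥(ind K θ)) := LinearMap.addCommGroup

instance : Module ℂ (↥(ind K θ) →ₗ[ℂ] ↥(ind K θ)) := LinearMap.module

/-- The Hecke algebra condition: `F (k₁ g k₂) = θ k₂⁻¹ ∘ F g ∘ θ k₁⁻¹`. -/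
def IsHecke (F : G → (V →ₗ[ℂ] V)) : Prop :=
  ∀ (g : G) (k₁ k₂ : K),
    F ((k₁ : G) * g * (k₂ : G)) = (θ k₂⁻¹).toLinearMap ∘ₗ F g ∘ₗ (θ k₁⁻¹).toLinearMap

/-- Convolution on the Hecke algebra: `(F₁ * F₂) g = ∑ h, F₁ (h⁻¹ g) ∘ F₂ h`. -/
def heckeConv (F₁ F₂ : G → (V →ₗ[ℂ] V)) : G → (V →ₗ[ℂ] V) :=
  fun g => ∑ h : G, F₁ (h⁻¹ * g) ∘ₗ F₂ h

/-- Involution on the Hecke algebra: `F* g = (F g⁻¹)*`. -/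
def heckeStar (F : G → (V →ₗ[ℂ] V)) : G → (V →ₗ[ℂ] V) :=
  fun g => LinearMap.adjoint (F g⁻¹)

/-- The inner product on the Hecke algebra:
`⟨F₁, F₂⟩ = ∑ g, (dim V)⁻¹ tr (F₂(g)* ∘ F₁(g))`. -/
def heckeInner (F₁ F₂ : G → (V →ₗ[ℂ] V)) : ℂ :=
  ∑ g : G, (Module.finrank ℂ V : ℂ)⁻¹ *
    LinearMap.trace ℂ V (LinearMap.adjoint (F₂ g) ∘ₗ F₁ g)

/-- `(ξ F) f g = ∑ h, F (h⁻¹ g) (f h)`. -/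
def xiFun (F : G → (V →ₗ[ℂ] V)) (f : G → V) : G → V := fun g => ∑ h : G, F (h⁻¹ * g) (f h)

/-- `ξ F` as a linear endomorphism of `G → V`. -/
def xiL (F : G → (V →ₗ[ℂ] V)) : (G → V) →ₗ[ℂ] (G → V) where
  toFun := xiFun F
  map_add' f₁ f₂ := by funext g; simp [xiFun, Finset.sum_add_distrib]
  map_smul' c f := by funext g; simp [xiFun, Finset.smul_sum]

/-- The paper's inner product on the induced space:
`⟨f₁, f₂⟩ = |K|⁻¹ ∑ g, ⟨f₁ g, f₂ g⟩_V` (conjugate-linear in the second variable). -/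
def innerInd (f₁ f₂ : G → V) : ℂ := (Nat.card K : ℂ)⁻¹ * ∑ g : G, (inner ℂ (f₂ g) (f₁ g) : ℂ)

/-- Convolution of complex valued functions on `G`. -/
def convC (f₁ f₂ : G → ℂ) : G → ℂ := fun g => ∑ h : G, f₁ h * f₂ (h⁻¹ * g)

/-- The involution `f* g = conj (f g⁻¹)` on `L(G)`. -/
def starC (f : G → ℂ) : G → ℂ := fun g => conj (f g⁻¹)

/-- The paper's inner product on `L(G)`: `⟨f₁, f₂⟩ = ∑ g, f₁ g • conj (f₂ g)`. -/
def innerC (f₁ f₂ : G → ℂ) : ℂ := ∑ g : G, f₁ g * conj (f₂ g)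

/-- The function `ψ (k) = (d_θ/|K|) ⟨v, θ k v⟩` on `K`, extended by `0` on `G \ K`. -/
def psi (v : V) : G → ℂ := fun g =>
  if h : g ∈ K then ((Module.finrank ℂ V : ℂ) / (Nat.card K : ℂ)) * (inner ℂ (θ ⟨g, h⟩ v) v : ℂ)
  else 0

/-- `(T_v f) g = √(d_θ/|K|) ⟨f g, v⟩`. -/
def Tv (v : V) (f : G → V) : G → ℂ := fun g =>
  (Real.sqrt ((Module.finrank ℂ V : ℝ) / (Nat.card K : ℝ)) : ℂ) * (inner ℂ v (f g) : ℂ)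

/-- The Hecke algebra `H(G,K,ψ) = {f : f = ψ * f * ψ}` as a set. -/
def HSet (v : V) : Set (G → ℂ) := {f | convC (convC (psi K θ v) f) (psi K θ v) = f}

/-- `(S_v F) g = d_θ ⟨F g v, v⟩`. -/
def Sv (v : V) (F : G → (V →ₗ[ℂ] V)) : G → ℂ :=
  fun g => (Module.finrank ℂ V : ℂ) * (inner ℂ v (F g v) : ℂ)

/-- A spherical function: an element of `H(G,K,ψ)` taking value `1` at the identity which
is an eigenvector of all convolution operators coming from `H(G,K,ψ)`. -/
def IsSpherical (v : V) (φ : G → ℂ) : Prop :=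
  φ ∈ HSet K θ v ∧ φ 1 = 1 ∧ ∀ f ∈ HSet K θ v, ∃ c : ℂ, convC φ f = c • φ

/-- The intertwining space `Hom_{K_s}(Res^K_{K_s} θ, θ^s)` where `K_s = K ∩ s K s⁻¹`
and `θ^s (x) = θ (s⁻¹ x s)`. -/
def interSpace (s : G) : Submodule ℂ (V →ₗ[ℂ] V) where
  carrier := {T | ∀ (x : G) (hx : x ∈ K) (hx' : s⁻¹ * x * s ∈ K),
      T ∘ₗ (θ ⟨x, hx⟩).toLinearMap = (θ ⟨s⁻¹ * x * s, hx'⟩).toLinearMap ∘ₗ T}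
  add_mem' := by
    intro a b ha hb x hx hx'
    simp only [LinearMap.add_comp, LinearMap.comp_add, ha x hx hx', hb x hx hx']
  zero_mem' := by
    intro x hx hx'
    simp
  smul_mem' := by
    intro c a ha x hx hx'
    simp only [LinearMap.smul_comp, LinearMap.comp_smul, ha x hx hx']

/-- `S` is a complete set of representatives of the double cosets `K\G/K`. -/
def IsDoubleCosetReps (S : Finset G) : Prop :=
  ∀ g : G, ∃! s : G, s ∈ S ∧ ∃ k₁ k₂ : K, g = (k₁ : G) * s * (k₂ : G)

/-- The commutant `End_G(Ind_K^G V)`. -/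
def commutant : Submodule ℂ (↥(ind K θ) →ₗ[ℂ] ↥(ind K θ)) where
  carrier := {T | ∀ (h : G) (f : ↥(ind K θ)), T (lamL K θ h f) = lamL K θ h (T f)}
  add_mem' := by
    intro a b ha hb h f
    simp [ha h f, hb h f]
  zero_mem' := by intro h f; simp
  smul_mem' := by
    intro c a ha h f
    simp [ha h f]

/-- The space `Hom_G(W, Ind_K^G V)` of `G`-equivariant linear maps from `(σ, W)` to the
induced representation. -/
def homGInd {W : Type} [AddCommGroup W] [Module ℂ W] (σ : G →* (W ≃ₗ[ℂ] W)) :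
    Submodule ℂ (W →ₗ[ℂ] (G → V)) where
  carrier := {A | (∀ w : W, A w ∈ ind K θ) ∧ ∀ (g : G) (w : W), A (σ g w) = translate g (A w)}
  add_mem' := by
    rintro A B ⟨hA₁, hA₂⟩ ⟨hB₁, hB₂⟩
    refine ⟨fun w => (ind K θ).add_mem (hA₁ w) (hB₁ w), fun g w => ?_⟩
    funext x
    simp [translate, hA₂ g w, hB₂ g w, Pi.add_apply]
  zero_mem' := by
    refine ⟨fun w => (ind K θ).zero_mem, fun g w => ?_⟩
    funext x
    simp [translate]
  smul_mem' := by
    rintro c A ⟨hA₁, hA₂⟩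
    refine ⟨fun w => (ind K θ).smul_mem c (hA₁ w), fun g w => ?_⟩
    funext x
    simp [translate, hA₂ g w]

/-- `Ind_K^G θ` is multiplicity-free: every irreducible representation of `G` occurs with
multiplicity at most `1`. -/
def IsMultFree : Prop :=
  ∀ (W : Type) [AddCommGroup W] [Module ℂ W] [FiniteDimensional ℂ W]
    (σ : G →* (W ≃ₗ[ℂ] W)), IsIrreducibleRep σ → Module.finrank ℂ ↥(homGInd K θ σ) ≤ 1

theorem convC_add_left (f₁ f₂ g : G → ℂ) : convC (f₁ + f₂) g = convC f₁ g + convC f₂ g := by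
  funext x
  simp [convC, add_mul, Finset.sum_add_distrib]

theorem convC_add_right (f g₁ g₂ : G → ℂ) : convC f (g₁ + g₂) = convC f g₁ + convC f g₂ := by
  funext x
  simp [convC, mul_add, Finset.sum_add_distrib]

theorem convC_smul_left (c : ℂ) (f g : G → ℂ) : convC (c • f) g = c • convC f g := by
  funext x
  simp [convC, Finset.mul_sum, mul_assoc]

theorem convC_smul_right (c : ℂ) (f g : G → ℂ) : convC f (c • g) = c • convC f g := by
  funext x
  simp [convC, Finset.mul_sum, mul_left_comm]

theorem convC_zero_left (g : G → ℂ) : convC 0 g = 0 := by funext x; simp [convC]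

theorem convC_zero_right (f : G → ℂ) : convC f 0 = 0 := by funext x; simp [convC]

/-- The Hecke algebra `H(G,K,ψ)` as a subspace of `L(G)`. -/
def heckeSub (v : V) : Submodule ℂ (G → ℂ) where
  carrier := HSet K θ v
  add_mem' := by
    intro a b ha hb
    have ha' : convC (convC (psi K θ v) a) (psi K θ v) = a := ha
    have hb' : convC (convC (psi K θ v) b) (psi K θ v) = b := hb
    show convC (convC (psi K θ v) (a + b)) (psi K θ v) = a + b
    rw [convC_add_right, convC_add_left, ha', hb']
  zero_mem' := by
    show convC (convC (psi K θ v) 0) (psi K θ v) = 0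
    rw [convC_zero_right, convC_zero_left]
  smul_mem' := by
    intro c a ha
    have ha' : convC (convC (psi K θ v) a) (psi K θ v) = a := ha
    show convC (convC (psi K θ v) (c • a)) (psi K θ v) = c • a
    rw [convC_smul_right, convC_smul_left, ha']

/-- The subspace `I(G,K,ψ) = {f ∈ L(G) : f * ψ = f}`. -/
def ISub (v : V) : Submodule ℂ (G → ℂ) where
  carrier := {φ | convC φ (psi K θ v) = φ}
  add_mem' := by
    intro a b ha hb
    have ha' : convC a (psi K θ v) = a := ha
    have hb' : convC b (psi K θ v) = b := hb
    show convC (a + b) (psi K θ v) = a + b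
    rw [convC_add_left, ha', hb']
  zero_mem' := by
    show convC 0 (psi K θ v) = 0
    rw [convC_zero_left]
  smul_mem' := by
    intro c a ha
    have ha' : convC a (psi K θ v) = a := ha
    show convC (c • a) (psi K θ v) = c • a
    rw [convC_smul_left, ha']

/-- The subspace of `L(G)` spanned by the left translates of `φ`. -/
def sphSpan (φ : G → ℂ) : Submodule ℂ (G → ℂ) :=
  Submodule.span ℂ (Set.range fun g : G => translate g φ)

/-- A submodule of functions on `G` invariant under all left translations. -/
def IsInvariantSub {A : Type} [AddCommGroup A] [Module ℂ A] (p : Submodule ℂ (G → A)) : Prop :=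
  ∀ h : G, ∀ f ∈ p, translate h f ∈ p

/-- `p` is an irreducible `G`-invariant subspace of the induced representation. -/
def IsIrredSubOfInd (p : Submodule ℂ (G → V)) : Prop :=
  p ≤ ind K θ ∧ IsInvariantSub p ∧ p ≠ ⊥ ∧
    ∀ q : Submodule ℂ (G → V), q ≤ p → IsInvariantSub q → q = ⊥ ∨ q = p

/-! ### Auxiliary lemmas for Statement 7 -/

section Statement7Aux

lemma sum_K (K : Subgroup G) (F : G → ℂ) (hF : ∀ g : G, g ∉ K → F g = 0) :
    ∑ g : G, F g = ∑ k : K, F (k : G) := by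
  rw [← Finset.sum_filter_of_ne (s := Finset.univ) (p := fun g => g ∈ K)
      (fun x _ hx => by by_contra h; exact hx (hF x h))]
  exact Finset.sum_subtype _ (by simp) F

def deltaC (a : G) : G → ℂ := fun x => if x = a then 1 else 0

lemma conv_delta (φ : G → ℂ) (a x : G) : convC φ (deltaC a) x = φ (x * a⁻¹) := by
  unfold convC deltaC
  have h : ∀ t : G, (t⁻¹ * x = a) ↔ (t = x * a⁻¹) := by
    intro t; constructor
    · intro h; rw [← h]; group
    · intro h; rw [h]; group
  simp only [mul_ite, mul_one, mul_zero]
  rw [Finset.sum_congr rfl (fun t _ => by rw [if_congr (h t) rfl rfl])]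
  simp

lemma conv_delta_one (φ : G → ℂ) : convC φ (deltaC (1 : G)) = φ := by
  funext x; rw [conv_delta]; simp

lemma convC_assoc (a b c : G → ℂ) : convC (convC a b) c = convC a (convC b c) := by
  funext g
  unfold convC
  simp only [Finset.sum_mul, Finset.mul_sum]
  rw [Finset.sum_comm]
  refine Finset.sum_congr rfl (fun s _ => ?_)
  refine Fintype.sum_equiv (Equiv.mulLeft s⁻¹) _ _ (fun t => ?_)
  simp [mul_assoc, mul_inv_rev]

lemma psi_coe (K : Subgroup G) (θ : ↥K →* (V ≃ₗ[ℂ] V)) (v : V) (k : K) :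
    psi K θ v (k : G) =
      ((Module.finrank ℂ V : ℂ) / (Nat.card K : ℂ)) * (inner ℂ (θ k v) v : ℂ) := by
  unfold psi
  rw [dif_pos k.2]

lemma psi_nmem (K : Subgroup G) (θ : ↥K →* (V ≃ₗ[ℂ] V)) (v : V) {g : G} (hg : g ∉ K) :
    psi K θ v g = 0 := dif_neg hg

lemma theta_inv_apply (K : Subgroup G) (θ : ↥K →* (V ≃ₗ[ℂ] V)) (k : K) (x : V) :
    θ k⁻¹ (θ k x) = x := by
  have h : θ k⁻¹ * θ k = 1 := by rw [← map_mul, inv_mul_cancel, map_one]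
  calc θ k⁻¹ (θ k x) = (θ k⁻¹ * θ k) x := rfl
    _ = x := by rw [h]; rfl

lemma theta_mul_apply (K : Subgroup G) (θ : ↥K →* (V ≃ₗ[ℂ] V)) (a b : K) (x : V) :
    θ (a * b) x = θ a (θ b x) := by rw [map_mul]; rfl

lemma conj_psi (K : Subgroup G) (θ : ↥K →* (V ≃ₗ[ℂ] V)) (v : V)
    (hu : IsUnitaryRep θ) (g : G) : conj (psi K θ v g) = psi K θ v g⁻¹ := by
  by_cases hg : g ∈ K
  · have hg' : g⁻¹ ∈ K := inv_mem hg
    unfold psi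
    rw [dif_pos hg, dif_pos hg']
    rw [map_mul]
    congr 1
    · simp [map_div₀, Complex.conj_natCast]
    · rw [inner_conj_symm]
      have h2 : (⟨g⁻¹, hg'⟩ : K) = (⟨g, hg⟩ : K)⁻¹ := rfl
      rw [h2]
      rw [← hu (⟨g, hg⟩ : K)⁻¹ v (θ ⟨g, hg⟩ v), theta_inv_apply]
  · have hg' : g⁻¹ ∉ K := fun h => hg (by simpa using inv_mem h)
    rw [psi_nmem K θ v hg, psi_nmem K θ v hg', map_zero]

lemma nontrivial_of_irr {H : Type} [Group H] (ρ : H →* (V ≃ₗ[ℂ] V))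
    (hirr : IsIrreducibleRep ρ) : Nontrivial V := by
  by_contra h
  rw [not_nontrivial_iff_subsingleton] at h
  exact hirr.1 (Subsingleton.elim _ _)

lemma schur (K : Subgroup G) (θ : ↥K →* (V ≃ₗ[ℂ] V)) (hirr : IsIrreducibleRep θ)
    (T : V →ₗ[ℂ] V) (hT : ∀ (k : K) (x : V), θ k (T x) = T (θ k x)) :
    ∃ c : ℂ, T = c • LinearMap.id := by
  haveI : Nontrivial V := nontrivial_of_irr θ hirr
  obtain ⟨c, hc⟩ := Module.End.exists_eigenvalue T
  refine ⟨c, ?_⟩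
  have hinv : ∀ (k : K) (x : V), x ∈ Module.End.eigenspace T c →
      θ k x ∈ Module.End.eigenspace T c := by
    intro k x hx
    rw [Module.End.mem_eigenspace_iff] at hx ⊢
    rw [← hT k x, hx, map_smul]
  rcases hirr.2 _ hinv with h | h
  · exact absurd h hc
  · ext x
    have hx : x ∈ Module.End.eigenspace T c := h ▸ Submodule.mem_top
    rw [Module.End.mem_eigenspace_iff] at hx
    simpa using hx

/-- The rank-one operator `x ↦ ⟪v, x⟫ • v`. -/
def rankOne (v : V) : V →ₗ[ℂ] V where
  toFun x := (inner ℂ v x : ℂ) • v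
  map_add' x y := by simp [inner_add_right, add_smul]
  map_smul' c x := by simp [inner_smul_right, smul_smul]

lemma trace_rankOne (v : V) (hv : ‖v‖ = 1) :
    LinearMap.trace ℂ V (rankOne v) = 1 := by
  classical
  obtain b := stdOrthonormalBasis ℂ V
  rw [LinearMap.trace_eq_matrix_trace ℂ b.toBasis]
  rw [Matrix.trace]
  have h : ∀ i, (LinearMap.toMatrix b.toBasis b.toBasis (rankOne v)) i i
      = (inner ℂ v (b i) : ℂ) * (inner ℂ (b i) v : ℂ) := by
    intro i
    rw [LinearMap.toMatrix_apply]
    simp only [OrthonormalBasis.coe_toBasis, OrthonormalBasis.coe_toBasis_repr_apply,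
      OrthonormalBasis.repr_apply_apply, rankOne, LinearMap.coe_mk, AddHom.coe_mk,
      inner_smul_right]
  simp only [Matrix.diag_apply, h]
  rw [OrthonormalBasis.sum_inner_mul_inner, inner_self_eq_norm_sq_to_K, hv]
  norm_num

lemma orth (K : Subgroup G) (θ : ↥K →* (V ≃ₗ[ℂ] V)) (v : V)
    (hu : IsUnitaryRep θ) (hirr : IsIrreducibleRep θ) (hv : ‖v‖ = 1) (w : V) :
    ∑ k : K, (inner ℂ (θ k v) v : ℂ) * (inner ℂ (θ k⁻¹ w) v : ℂ)
      = ((Nat.card K : ℂ) / (Module.finrank ℂ V : ℂ)) * (inner ℂ w v : ℂ) := by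
  haveI : Nontrivial V := nontrivial_of_irr θ hirr
  set B := rankOne v with hB
  set T : V →ₗ[ℂ] V := ∑ k : K, (θ k).toLinearMap ∘ₗ B ∘ₗ (θ k⁻¹).toLinearMap with hTdef
  have hTapp : ∀ x, T x = ∑ k : K, θ k ((inner ℂ v (θ k⁻¹ x) : ℂ) • v) := by
    intro x
    rw [hTdef, LinearMap.sum_apply]
    rfl
  have hcomm : ∀ (m : K) (x : V), θ m (T x) = T (θ m x) := by
    intro m x
    rw [hTapp, hTapp, map_sum]
    refine Fintype.sum_equiv (Equiv.mulLeft m) _ _ (fun k => ?_)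
    simp only [Equiv.coe_mulLeft]
    rw [mul_inv_rev, theta_mul_apply, theta_mul_apply, theta_inv_apply]
  obtain ⟨c, hc⟩ := schur K θ hirr T hcomm
  have hdne : (Module.finrank ℂ V : ℂ) ≠ 0 :=
    Nat.cast_ne_zero.mpr (Module.finrank_pos (R := ℂ) (M := V)).ne'
  have htr : LinearMap.trace ℂ V T = (Nat.card K : ℂ) := by
    rw [hTdef, map_sum]
    have h : ∀ k : K,
        LinearMap.trace ℂ V ((θ k).toLinearMap ∘ₗ B ∘ₗ (θ k⁻¹).toLinearMap) = 1 := by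
      intro k
      have h1 : (θ k).toLinearMap ∘ₗ B ∘ₗ (θ k⁻¹).toLinearMap
          = (θ k).toLinearMap * (B ∘ₗ (θ k⁻¹).toLinearMap) := rfl
      rw [h1, LinearMap.trace_mul_comm]
      have h2 : B ∘ₗ (θ k⁻¹).toLinearMap * (θ k).toLinearMap = B := by
        ext x
        show B (θ k⁻¹ (θ k x)) = B x
        rw [theta_inv_apply]
      rw [h2, hB, trace_rankOne v hv]
    simp only [h]
    rw [Nat.card_eq_fintype_card]
    simp
  have htr2 : LinearMap.trace ℂ V T = c * (Module.finrank ℂ V : ℂ) := by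
    rw [hc]
    simp [LinearMap.trace_id]
  have hcval : c = (Nat.card K : ℂ) / (Module.finrank ℂ V : ℂ) := by
    field_simp
    rw [← htr2, htr, Nat.card_eq_fintype_card]
  have hTw : T w = c • w := by rw [hc]; rfl
  have hlhs : (inner ℂ (T w) v : ℂ)
      = ∑ k : K, (inner ℂ (θ k v) v : ℂ) * (inner ℂ (θ k⁻¹ w) v : ℂ) := by
    rw [hTapp, sum_inner]
    refine Finset.sum_congr rfl (fun k _ => ?_)
    rw [map_smul, inner_smul_left, inner_conj_symm]
    ring
  have hrhs : (inner ℂ (T w) v : ℂ) = c * (inner ℂ w v : ℂ) := by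
    rw [hTw, inner_smul_left]
    congr 1
    rw [hcval]
    simp [map_div₀, Complex.conj_natCast]
  rw [← hlhs, hrhs, hcval]

lemma key_sum (K : Subgroup G) (θ : ↥K →* (V ≃ₗ[ℂ] V)) (v : V)
    (hu : IsUnitaryRep θ) (φ : G → ℂ) (g h : G) :
    ∑ m : G, φ (g * m⁻¹ * h) * psi K θ v m
      = ∑ k : K, φ (g * (k : G) * h) * conj (psi K θ v (k : G)) := by
  rw [sum_K K _ (fun m hm => by rw [psi_nmem K θ v hm, mul_zero])]
  refine Fintype.sum_equiv (Equiv.inv K) _ _ (fun k => ?_)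
  simp only [Equiv.inv_apply]
  have h1 : ((k⁻¹ : K) : G) = ((k : G))⁻¹ := rfl
  rw [h1, conj_psi K θ v hu, inv_inv]

lemma conv_phi (K : Subgroup G) (θ : ↥K →* (V ≃ₗ[ℂ] V)) (v : V)
    (hu : IsUnitaryRep θ) (φ : G → ℂ) (h g : G) :
    convC (convC φ (deltaC h⁻¹)) (psi K θ v) g
      = ∑ k : K, φ (g * (k : G) * h) * conj (psi K θ v (k : G)) := by
  rw [← key_sum K θ v hu φ g h]
  show ∑ t : G, convC φ (deltaC h⁻¹) t * psi K θ v (t⁻¹ * g) = _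
  refine Fintype.sum_equiv ((Equiv.inv G).trans (Equiv.mulRight g)) _ _ (fun t => ?_)
  simp only [Equiv.trans_apply, Equiv.inv_apply, Equiv.coe_mulRight]
  rw [conv_delta]
  congr 2 <;> group

lemma conv_psi_right (K : Subgroup G) (θ : ↥K →* (V ≃ₗ[ℂ] V)) (v : V)
    (hu : IsUnitaryRep θ) (φ : G → ℂ) (g : G) :
    convC φ (psi K θ v) g = ∑ k : K, φ (g * (k : G)) * conj (psi K θ v (k : G)) := by
  have h := conv_phi K θ v hu φ 1 g
  rw [inv_one, conv_delta_one] at h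
  simpa using h

lemma conv_psi_left (K : Subgroup G) (θ : ↥K →* (V ≃ₗ[ℂ] V)) (v : V)
    (hu : IsUnitaryRep θ) (φ : G → ℂ) (h : G) :
    convC (psi K θ v) φ h = ∑ k : K, φ ((k : G) * h) * conj (psi K θ v (k : G)) := by
  have hk := key_sum K θ v hu φ 1 h
  calc convC (psi K θ v) φ h = ∑ m : G, φ (1 * m⁻¹ * h) * psi K θ v m := by
        unfold convC
        refine Finset.sum_congr rfl (fun t _ => ?_)
        rw [one_mul, mul_comm]
      _ = ∑ k : K, φ (1 * (k : G) * h) * conj (psi K θ v (k : G)) := hk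
      _ = ∑ k : K, φ ((k : G) * h) * conj (psi K θ v (k : G)) := by simp [one_mul]

lemma psi_conv_psi (K : Subgroup G) (θ : ↥K →* (V ≃ₗ[ℂ] V)) (v : V)
    (hu : IsUnitaryRep θ) (hirr : IsIrreducibleRep θ) (hv : ‖v‖ = 1) :
    convC (psi K θ v) (psi K θ v) = psi K θ v := by
  haveI : Nontrivial V := nontrivial_of_irr θ hirr
  have hdne : (Module.finrank ℂ V : ℂ) ≠ 0 :=
    Nat.cast_ne_zero.mpr (Module.finrank_pos (R := ℂ) (M := V)).ne'
  have hnne : (Nat.card K : ℂ) ≠ 0 := by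
    rw [Nat.card_eq_fintype_card]
    exact Nat.cast_ne_zero.mpr Fintype.card_ne_zero
  set r : ℂ := (Module.finrank ℂ V : ℂ) / (Nat.card K : ℂ) with hr
  funext g
  show ∑ t : G, psi K θ v t * psi K θ v (t⁻¹ * g) = psi K θ v g
  by_cases hg : g ∈ K
  · rw [sum_K K _ (fun t ht => by rw [psi_nmem K θ v ht, zero_mul])]
    have hterm : ∀ k : K, psi K θ v (k : G) * psi K θ v ((k : G)⁻¹ * g)
        = r ^ 2 * ((inner ℂ (θ k v) v : ℂ) * (inner ℂ (θ k⁻¹ (θ ⟨g, hg⟩ v)) v : ℂ)) := by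
      intro k
      have h1 : (((k⁻¹ * ⟨g, hg⟩ : K) : G)) = (k : G)⁻¹ * g := rfl
      rw [← h1, psi_coe, psi_coe, theta_mul_apply, ← hr]
      ring
    simp only [hterm]
    rw [← Finset.mul_sum, orth K θ v hu hirr hv]
    unfold psi
    rw [dif_pos hg, ← hr]
    have harith : r ^ 2 * ((Nat.card K : ℂ) / (Module.finrank ℂ V : ℂ)) = r := by
      rw [hr]
      field_simp
    rw [← mul_assoc, harith]
  · rw [psi_nmem K θ v hg]
    refine Finset.sum_eq_zero (fun t _ => ?_)
    by_cases ht : t ∈ K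
    · have hng : t⁻¹ * g ∉ K := fun hmem => hg (by simpa using mul_mem ht hmem)
      rw [psi_nmem K θ v hng, mul_zero]
    · rw [psi_nmem K θ v ht, zero_mul]

lemma idem_right (ψf f : G → ℂ) (hψψ : convC ψf ψf = ψf)
    (hf : convC (convC ψf f) ψf = f) : convC f ψf = f := by
  conv_lhs => rw [← hf]
  rw [convC_assoc (convC ψf f) ψf ψf, hψψ, hf]

lemma idem_left (ψf f : G → ℂ) (hψψ : convC ψf ψf = ψf)
    (hf : convC (convC ψf f) ψf = f) : convC ψf f = f := by
  conv_lhs => rw [← hf]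
  rw [← convC_assoc, ← convC_assoc, hψψ, hf]

end Statement7Aux

/-- functional equation for spherical functions.  If `(G,K,θ)` is a
multiplicity-free triple, a nonzero `φ ∈ L(G)` is spherical iff
`∑_{k ∈ K} φ(g k h) conj(ψ k) = φ(g) φ(h)` for all `g, h ∈ G`. -/
theorem statement7 (K : Subgroup G) (θ : ↥K →* (V ≃ₗ[ℂ] V))
    (hu : IsUnitaryRep θ) (hirr : IsIrreducibleRep θ) (v : V) (hv : ‖v‖ = 1)
    (hmf : IsMultFree K θ) (φ : G → ℂ) (hφ : φ ≠ 0) :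
    IsSpherical K θ v φ ↔
      ∀ g h : G, (∑ k : K, φ (g * (k : G) * h) * conj (psi K θ v (k : G))) = φ g * φ h := by
  classical
  set ψ : G → ℂ := psi K θ v with hψ
  have hψψ : convC ψ ψ = ψ := psi_conv_psi K θ v hu hirr hv
  constructor
  · rintro ⟨hH, h1, heig⟩ g h
    have hH' : convC (convC ψ φ) ψ = φ := hH
    have hφψ : convC φ ψ = φ := idem_right ψ φ hψψ hH'
    have hψφ : convC ψ φ = φ := idem_left ψ φ hψψ hH'
    set f : G → ℂ := convC (convC ψ (deltaC h⁻¹)) ψ with hfdef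
    have hfH : f ∈ HSet K θ v := by
      show convC (convC ψ f) ψ = f
      have e1 : convC ψ f = f := by
        rw [hfdef, ← convC_assoc, ← convC_assoc, hψψ]
      rw [e1, hfdef, convC_assoc (convC ψ (deltaC h⁻¹)) ψ ψ, hψψ]
    obtain ⟨c, hc⟩ := heig f hfH
    have hφf : convC φ f = convC (convC φ (deltaC h⁻¹)) ψ := by
      rw [hfdef, ← convC_assoc, ← convC_assoc, hφψ]
    have hval : ∀ x : G, (∑ k : K, φ (x * (k : G) * h) * conj (ψ (k : G))) = c * φ x := by
      intro x
      rw [← conv_phi K θ v hu φ h x, ← hφf, hc]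
      simp
    have hc1 : c = φ h := by
      have h2 := hval 1
      rw [h1, mul_one] at h2
      rw [← h2]
      calc (∑ k : K, φ (1 * (k : G) * h) * conj (ψ (k : G)))
          = ∑ k : K, φ ((k : G) * h) * conj (ψ (k : G)) := by simp [one_mul]
        _ = convC ψ φ h := (conv_psi_left K θ v hu φ h).symm
        _ = φ h := by rw [hψφ]
    rw [hval g, hc1, mul_comm]
  · intro hΦ
    obtain ⟨g₀, hg₀⟩ := Function.ne_iff.mp hφ
    have hg₀' : φ g₀ ≠ 0 := hg₀
    have FEq : ∀ h : G, convC (convC φ (deltaC h⁻¹)) ψ = fun g => φ g * φ h := by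
      intro h
      funext g
      rw [conv_phi K θ v hu φ h g]
      exact hΦ g h
    have hφψ1 : convC φ ψ = fun g => φ g * φ 1 := by
      have h := FEq 1
      rwa [inv_one, conv_delta_one] at h
    have key1 : ∀ g h : G, (φ g * φ 1) * φ h = φ g * φ h := by
      intro g h
      have hA : convC (fun x => φ x * φ h) ψ g = convC φ ψ g * φ h := by
        show ∑ t : G, (φ t * φ h) * ψ (t⁻¹ * g) = (∑ t : G, φ t * ψ (t⁻¹ * g)) * φ h
        rw [Finset.sum_mul]
        exact Finset.sum_congr rfl (fun t _ => by ring)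
      have hB : convC (fun x => φ x * φ h) ψ = fun g => φ g * φ h := by
        calc convC (fun x => φ x * φ h) ψ
            = convC (convC (convC φ (deltaC h⁻¹)) ψ) ψ := by rw [FEq h]
          _ = convC (convC φ (deltaC h⁻¹)) ψ := by rw [convC_assoc _ ψ ψ, hψψ]
          _ = fun g => φ g * φ h := FEq h
      have hBg : convC (fun x => φ x * φ h) ψ g = φ g * φ h := by rw [hB]
      rw [hA, hφψ1] at hBg
      exact hBg
    have h1 : φ 1 = 1 := by
      have h := key1 g₀ g₀
      have hne : φ g₀ ≠ 0 := hg₀'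
      have h' : φ g₀ * (φ 1 * φ g₀) = φ g₀ * φ g₀ := by rw [← h]; ring
      have h'' := mul_left_cancel₀ hne h'
      exact mul_right_cancel₀ hne (by rw [h'']; ring)
    have hφψ : convC φ ψ = φ := by
      funext g
      rw [hφψ1]
      simp [h1]
    have hψφ : convC ψ φ = φ := by
      funext h
      calc convC ψ φ h = ∑ k : K, φ ((k : G) * h) * conj (ψ (k : G)) :=
            conv_psi_left K θ v hu φ h
        _ = ∑ k : K, φ (1 * (k : G) * h) * conj (ψ (k : G)) := by simp [one_mul]
        _ = φ 1 * φ h := hΦ 1 h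
        _ = φ h := by rw [h1, one_mul]
    refine ⟨?_, h1, ?_⟩
    · show convC (convC ψ φ) ψ = φ
      rw [hψφ, hφψ]
    · intro f hf
      have hf' : convC (convC ψ f) ψ = f := hf
      have hfψ : convC f ψ = f := idem_right ψ f hψψ hf'
      refine ⟨∑ s : G, f s * φ s⁻¹, ?_⟩
      funext g
      show convC φ f g = (∑ s : G, f s * φ s⁻¹) • φ g
      rw [smul_eq_mul]
      calc convC φ f g = ∑ t : G, φ t * f (t⁻¹ * g) := rfl
        _ = ∑ t : G, φ t * (∑ s : G, f s * ψ (s⁻¹ * (t⁻¹ * g))) := by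
            refine Finset.sum_congr rfl (fun t _ => ?_)
            conv_lhs => rw [← hfψ]
            rfl
        _ = ∑ s : G, f s * (∑ t : G, φ t * ψ (s⁻¹ * t⁻¹ * g)) := by
            simp only [Finset.mul_sum]
            rw [Finset.sum_comm]
            refine Finset.sum_congr rfl (fun s _ => ?_)
            refine Finset.sum_congr rfl (fun t _ => ?_)
            rw [mul_assoc]
            ring
        _ = ∑ s : G, f s * (φ g * φ s⁻¹) := by
            refine Finset.sum_congr rfl (fun s _ => ?_)
            congr 1
            have he : ∑ t : G, φ t * ψ (s⁻¹ * t⁻¹ * g)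
                = ∑ m : G, φ (g * m⁻¹ * s⁻¹) * ψ m := by
              refine Fintype.sum_equiv
                ((Equiv.inv G).trans ((Equiv.mulLeft s⁻¹).trans (Equiv.mulRight g))) _ _
                (fun t => ?_)
              simp only [Equiv.trans_apply, Equiv.inv_apply, Equiv.coe_mulLeft,
                Equiv.coe_mulRight]
              congr 2 <;> group
            rw [he, key_sum K θ v hu φ g s⁻¹]
            exact hΦ g s⁻¹
        _ = (∑ s : G, f s * φ s⁻¹) * φ g := by
            rw [Finset.sum_mul]
            exact Finset.sum_congr rfl (fun s _ => by ring)


end MFT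
end
end

section
/- Assume (G,K,θ) is a multiplicity-free triple, let (σ, W) be an irreducible unitary G-representation contained in Ind_K^G θ, and let L_σ : V → W be an isometric K-equivariant linear map spanning the one-dimensional space Hom_K(V, Res^G_K W). Then the map T_σ : W → (G → V) defined by (T_σ w)(g) = √((d_σ·|K|)/(d_θ·|G|))·L_σ*(σ(g⁻¹)w), where d_σ = dim W and L_σ* is the adjoint of L_σ, takes values in Ind_K^G V, is G-equivariant (T_σ∘σ(g) = λ(g)∘T_σ for all g ∈ G), and is an isometry. -/
open scoped BigOperators ComplexConjugate Classical

set_option linter.unusedSectionVars false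
set_option synthInstance.maxHeartbeats 1000000
set_option maxHeartbeats 1000000

noncomputable section

namespace MFT

variable {G : Type} [Group G] [Fintype G]
variable {V : Type} [NormedAddCommGroup V] [InnerProductSpace ℂ V] [FiniteDimensional ℂ V]

variable (K : Subgroup G) (θ : ↥K →* (V ≃ₗ[ℂ] V))

/-- The map `T_σ : W → Ind_K^G V`,
`(T_σ w) g = √((d_σ |K|)/(d_θ |G|)) L_σ* (σ(g⁻¹) w)`. -/
def Tsig (K : Subgroup G) {W : Type} [NormedAddCommGroup W] [InnerProductSpace ℂ W]
    [FiniteDimensional ℂ W] (σ : G →* (W ≃ₗ[ℂ] W)) (L : V →ₗ[ℂ] W) (w : W) : G → V :=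
  fun g =>
    (Real.sqrt ((Module.finrank ℂ W * Nat.card K : ℝ) /
        (Module.finrank ℂ V * Fintype.card G : ℝ)) : ℂ) •
      LinearMap.adjoint L (σ g⁻¹ w)

/-- Let `(G,K,θ)` be a multiplicity-free triple, `(σ, W)` an irreducible
unitary `G`-representation contained in `Ind_K^G θ` and `L_σ : V → W` an isometric
`K`-equivariant map spanning the one-dimensional space `Hom_K(V, Res^G_K W)`.  Then
`T_σ : W → (G → V)` takes values in `Ind_K^G V`, is linear, `G`-equivariant and isometric. -/
theorem statement10 (K : Subgroup G) (θ : ↥K →* (V ≃ₗ[ℂ] V))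
    (hu : IsUnitaryRep θ) (hirr : IsIrreducibleRep θ) (v : V) (hv : ‖v‖ = 1)
    (hmf : IsMultFree K θ)
    (W : Type) [NormedAddCommGroup W] [InnerProductSpace ℂ W] [FiniteDimensional ℂ W]
    (σ : G →* (W ≃ₗ[ℂ] W)) (huσ : IsUnitaryRep σ) (hirrσ : IsIrreducibleRep σ)
    -- σ is contained in Ind_K^G θ
    (hcont : homGInd K θ σ ≠ ⊥)
    -- L is an isometric K-equivariant map spanning Hom_K(V, Res^G_K W)
    (L : V →ₗ[ℂ] W) (hLiso : ∀ x : V, ‖L x‖ = ‖x‖)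
    (hLequiv : ∀ (k : K) (x : V), L (θ k x) = σ (k : G) (L x))
    (hLspan : ∀ A : V →ₗ[ℂ] W, (∀ (k : K) (x : V), A (θ k x) = σ (k : G) (A x)) →
      ∃ c : ℂ, A = c • L) :
    -- T_σ maps into the induced space,
    (∀ w : W, Tsig K σ L w ∈ ind K θ) ∧
    -- is linear,
    (∀ w₁ w₂ : W, Tsig K σ L (w₁ + w₂) = Tsig K σ L w₁ + Tsig K σ L w₂) ∧
    (∀ (c : ℂ) (w : W), Tsig K σ L (c • w) = c • Tsig K σ L w) ∧
    -- G-equivariant,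
    (∀ (h : G) (w : W), Tsig K σ L (σ h w) = translate h (Tsig K σ L w)) ∧
    -- and isometric
    (∀ w₁ w₂ : W, innerInd K (Tsig K σ L w₁) (Tsig K σ L w₂) = (inner ℂ w₂ w₁ : ℂ)) := by
  classical
  haveI hVnt : Nontrivial V := by
    by_contra h
    rw [not_nontrivial_iff_subsingleton] at h
    exact hirr.1 (Subsingleton.elim _ _)
  haveI hWnt : Nontrivial W := by
    by_contra h
    rw [not_nontrivial_iff_subsingleton] at h
    exact hirrσ.1 (Subsingleton.elim _ _)
  have hmul : ∀ (a b : G) (x : W), σ a (σ b x) = σ (a * b) x := by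
    intro a b x; rw [map_mul]; rfl
  have hmulθ : ∀ (a b : K) (x : V), θ a (θ b x) = θ (a * b) x := by
    intro a b x; rw [map_mul]; rfl
  have hone : ∀ x : W, σ 1 x = x := by intro x; rw [map_one]; rfl
  have honeθ : ∀ x : V, θ 1 x = x := by intro x; rw [map_one]; rfl
  have hLinner : ∀ x y : V, (inner ℂ (L x) (L y) : ℂ) = inner ℂ x y := fun x y =>
    LinearIsometry.inner_map_map ⟨L, hLiso⟩ x y
  set M : W →ₗ[ℂ] W := L ∘ₗ LinearMap.adjoint L with hM
  set A : W →ₗ[ℂ] W :=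
    ∑ g : G, (σ g).toLinearMap ∘ₗ M ∘ₗ (σ g⁻¹).toLinearMap with hA
  have hA_apply : ∀ x : W, A x = ∑ g : G, σ g (M (σ g⁻¹ x)) := by
    intro x
    rw [hA, LinearMap.sum_apply]
    rfl
  have hAcomm : ∀ (h : G) (x : W), A (σ h x) = σ h (A x) := by
    intro h x
    rw [hA_apply, hA_apply, map_sum]
    refine Fintype.sum_equiv (Equiv.mulLeft h⁻¹)
      (fun g => σ g (M (σ g⁻¹ (σ h x)))) _ ?_
    intro g
    simp only [Equiv.coe_mulLeft]
    rw [hmul g⁻¹ h, hmul h (h⁻¹ * g), mul_inv_cancel_left, mul_inv_rev, inv_inv]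
  obtain ⟨μ, hμ⟩ := Module.End.exists_eigenvalue (A : Module.End ℂ W)
  have heig : Module.End.eigenspace (A : Module.End ℂ W) μ = ⊤ := by
    rcases hirrσ.2 (Module.End.eigenspace A μ) (fun h x hx => by
        rw [Module.End.mem_eigenspace_iff] at hx ⊢
        show A (σ h x) = μ • σ h x
        rw [hAcomm, hx, map_smul]) with h | h
    · exact absurd h hμ
    · exact h
  have hAx : ∀ x : W, A x = μ • x := fun x =>
    Module.End.mem_eigenspace_iff.mp (heig ▸ Submodule.mem_top : x ∈ _)
  have hLL : LinearMap.adjoint L ∘ₗ L = LinearMap.id := by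
    apply LinearMap.ext; intro x
    apply ext_inner_left ℂ
    intro y
    rw [LinearMap.comp_apply, LinearMap.adjoint_inner_right, hLinner, LinearMap.id_apply]
  have htrM : LinearMap.trace ℂ W M = (Module.finrank ℂ V : ℂ) := by
    rw [hM, LinearMap.trace_comp_comm', hLL, LinearMap.trace_id]
  have htrA : LinearMap.trace ℂ W A = (Fintype.card G : ℂ) * (Module.finrank ℂ V : ℂ) := by
    rw [hA, map_sum]
    have hterm : ∀ g : G,
        LinearMap.trace ℂ W ((σ g).toLinearMap ∘ₗ M ∘ₗ (σ g⁻¹).toLinearMap) =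
          (Module.finrank ℂ V : ℂ) := by
      intro g
      have h1 : (σ g⁻¹).toLinearMap ∘ₗ (σ g).toLinearMap = LinearMap.id := by
        apply LinearMap.ext; intro x
        show σ g⁻¹ (σ g x) = x
        rw [hmul, inv_mul_cancel, hone]
      rw [LinearMap.trace_comp_comm', LinearMap.comp_assoc, h1, LinearMap.comp_id, htrM]
    rw [Finset.sum_congr rfl (fun g _ => hterm g)]
    simp [Finset.sum_const, mul_comm]
  have htrA2 : LinearMap.trace ℂ W A = μ * (Module.finrank ℂ W : ℂ) := by
    have hAid : A = μ • (LinearMap.id : W →ₗ[ℂ] W) := by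
      apply LinearMap.ext; intro x
      simp [hAx x]
    rw [hAid, map_smul, LinearMap.trace_id, smul_eq_mul]
  have hdW : (Module.finrank ℂ W : ℂ) ≠ 0 := Nat.cast_ne_zero.mpr Module.finrank_pos.ne'
  have hdV : (Module.finrank ℂ V : ℂ) ≠ 0 := Nat.cast_ne_zero.mpr Module.finrank_pos.ne'
  have hcG : (Fintype.card G : ℂ) ≠ 0 := Nat.cast_ne_zero.mpr Fintype.card_ne_zero
  have hcK : (Nat.card K : ℂ) ≠ 0 := Nat.cast_ne_zero.mpr Nat.card_pos.ne'
  have hμval : μ = (Fintype.card G : ℂ) * (Module.finrank ℂ V : ℂ) / (Module.finrank ℂ W : ℂ) := by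
    rw [eq_div_iff hdW, ← htrA, htrA2]
  set r : ℝ := (Module.finrank ℂ W * Nat.card K : ℝ) /
      (Module.finrank ℂ V * Fintype.card G : ℝ) with hrdef
  have hr : 0 ≤ r := by positivity
  have hc2 : ((Real.sqrt r : ℝ) : ℂ) * ((Real.sqrt r : ℝ) : ℂ) = (r : ℂ) := by
    rw [← Complex.ofReal_mul, Real.mul_self_sqrt hr]
  have hrC : (r : ℂ) = (Module.finrank ℂ W : ℂ) * (Nat.card K : ℂ) /
      ((Module.finrank ℂ V : ℂ) * (Fintype.card G : ℂ)) := by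
    rw [hrdef]; push_cast; ring
  have h_adj_equiv : ∀ (k : K) (u : W),
      LinearMap.adjoint L (σ (↑k)⁻¹ u) = θ k⁻¹ (LinearMap.adjoint L u) := by
    intro k u
    apply ext_inner_left ℂ
    intro y
    rw [LinearMap.adjoint_inner_right]
    calc (inner ℂ (L y) (σ (↑k)⁻¹ u) : ℂ)
        = inner ℂ (σ (↑k : G) (L y)) (σ (↑k : G) (σ (↑k)⁻¹ u)) := (huσ (↑k) _ _).symm
      _ = inner ℂ (L (θ k y)) u := by rw [hmul, mul_inv_cancel, hone, hLequiv]
      _ = inner ℂ (θ k y) (LinearMap.adjoint L u) := (LinearMap.adjoint_inner_right L _ _).symm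
      _ = inner ℂ (θ k⁻¹ (θ k y)) (θ k⁻¹ (LinearMap.adjoint L u)) := (hu k⁻¹ _ _).symm
      _ = inner ℂ y (θ k⁻¹ (LinearMap.adjoint L u)) := by rw [hmulθ, inv_mul_cancel, honeθ]
  refine ⟨?_, ?_, ?_, ?_, ?_⟩
  · -- membership in the induced space
    intro w g k
    show (Real.sqrt r : ℂ) • LinearMap.adjoint L (σ (g * ↑k)⁻¹ w)
      = θ k⁻¹ ((Real.sqrt r : ℂ) • LinearMap.adjoint L (σ g⁻¹ w))
    rw [map_smul]
    congr 1
    rw [mul_inv_rev, ← hmul, h_adj_equiv]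
  · -- additivity
    intro w₁ w₂
    funext g
    simp [Tsig, smul_add]
  · -- homogeneity
    intro c w
    funext g
    simp only [Tsig, map_smul, Pi.smul_apply]
    rw [smul_comm]
  · -- equivariance
    intro h w
    funext g
    show (Real.sqrt r : ℂ) • LinearMap.adjoint L (σ g⁻¹ (σ h w))
      = (Real.sqrt r : ℂ) • LinearMap.adjoint L (σ (h⁻¹ * g)⁻¹ w)
    rw [hmul, mul_inv_rev, inv_inv]
  · -- isometry
    intro w₁ w₂
    have h1 : ∀ g : G, (inner ℂ (Tsig K σ L w₂ g) (Tsig K σ L w₁ g) : ℂ)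
        = (r : ℂ) * inner ℂ w₂ (σ g (M (σ g⁻¹ w₁))) := by
      intro g
      show (inner ℂ ((Real.sqrt r : ℂ) • LinearMap.adjoint L (σ g⁻¹ w₂))
          ((Real.sqrt r : ℂ) • LinearMap.adjoint L (σ g⁻¹ w₁)) : ℂ) = _
      rw [inner_smul_left, inner_smul_right, Complex.conj_ofReal, ← mul_assoc, hc2]
      congr 1
      rw [LinearMap.adjoint_inner_left]
      have : L (LinearMap.adjoint L (σ g⁻¹ w₁)) = M (σ g⁻¹ w₁) := rfl
      rw [this]
      calc (inner ℂ (σ g⁻¹ w₂) (M (σ g⁻¹ w₁)) : ℂ)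
          = inner ℂ (σ g (σ g⁻¹ w₂)) (σ g (M (σ g⁻¹ w₁))) := (huσ g _ _).symm
        _ = inner ℂ w₂ (σ g (M (σ g⁻¹ w₁))) := by rw [hmul, mul_inv_cancel, hone]
    show (Nat.card K : ℂ)⁻¹ * ∑ g : G, (inner ℂ (Tsig K σ L w₂ g) (Tsig K σ L w₁ g) : ℂ)
      = inner ℂ w₂ w₁
    rw [Finset.sum_congr rfl (fun g _ => h1 g), ← Finset.mul_sum, ← inner_sum, ← hA_apply,
      hAx, inner_smul_right, hrC, hμval]
    field_simp

end MFT
end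
end
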